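/- arXiv:1709.00080 — 5 statements merged into one kernel-verified Lean document; each statement's English description precedes it below -/
import Mathlib

section
/- Let φ₁, φ₂ : ZMod p → ZMod p and define the bilinear average A(f₁,f₂)(x) = p⁻¹ ∑_y f₁(x+φ₁(y)) f₂(x+φ₂(y)). Then for characteristic functions f of a set A ⊆ ZMod p with |A| = δp, if ‖A(f,f) − E[f]²‖₂ ≤ C p^{−γ} ‖f‖₂² with δ³ ≥ 2C p^{−γ} δ, then the number of pairs (x,y) ∈ (ZMod p)² with x, x+φ₁(y), x+φ₂(y) all in A is at least (δ³/2) p². -/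
open Finset

set_option maxHeartbeats 1000000 in
/-- Roth-type counting from the `L²` decay estimate: if `f = 1_A`, `|A| = δp`,
`‖A_Γ(f,f) − E[f]²‖₂ ≤ C p^{−γ} ‖f‖₂²` and `δ³ ≥ 2 C p^{−γ} δ`, then there are at least
`(δ³/2) p²` pairs `(x,y)` with `x, x+φ₁(y), x+φ₂(y) ∈ A`. -/
theorem roth_from_decay (p : ℕ) [Fact p.Prime] (φ₁ φ₂ : ZMod p → ZMod p)
    (A : Finset (ZMod p)) (δ C γ : ℝ)
    (hA : (A.card : ℝ) = δ * p)
    (f : ZMod p → ℂ) (hf : f = fun x => if x ∈ A then (1 : ℂ) else 0)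
    (hbound :
      ((p : ℝ)⁻¹ * ∑ x : ZMod p,
          ‖(p : ℂ)⁻¹ * (∑ y : ZMod p, f (x + φ₁ y) * f (x + φ₂ y))
            - ((p : ℂ)⁻¹ * ∑ x' : ZMod p, f x') ^ 2‖ ^ 2) ^ ((1 : ℝ)/2)
        ≤ C * (p : ℝ) ^ (-γ) *
          (((p : ℝ)⁻¹ * ∑ x : ZMod p, ‖f x‖ ^ 2) ^ ((1 : ℝ)/2)) ^ 2)
    (hδ : δ ^ 3 ≥ 2 * C * (p : ℝ) ^ (-γ) * δ) :
    ((Finset.univ.filter fun xy : ZMod p × ZMod p =>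
        xy.1 ∈ A ∧ xy.1 + φ₁ xy.2 ∈ A ∧ xy.1 + φ₂ xy.2 ∈ A).card : ℝ)
      ≥ δ ^ 3 / 2 * (p : ℝ) ^ 2 := by
  have hp : (0 : ℝ) < p := by exact_mod_cast (Fact.out : p.Prime).pos
  have hpne : (p : ℝ) ≠ 0 := ne_of_gt hp
  set g : ZMod p → ℝ := fun x => if x ∈ A then 1 else 0 with hgdef
  have hg0 : ∀ x, g x = 0 ∨ g x = 1 := fun x => by
    by_cases h : x ∈ A <;> simp [hgdef, h]
  have hgsum : ∑ x : ZMod p, g x = δ * p := by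
    have h1 : ∑ x : ZMod p, g x = (A.card : ℝ) := by
      simp [hgdef]
    rw [h1, hA]
  have hδ0 : 0 ≤ δ := by
    have h1 : (0 : ℝ) ≤ (A.card : ℝ) := by positivity
    nlinarith [hA]
  have hδ1 : δ ≤ 1 := by
    have h1 : (A.card : ℝ) ≤ (p : ℝ) := by
      have h2 := A.card_le_univ
      rw [ZMod.card p] at h2
      exact_mod_cast h2
    nlinarith [hA]
  set T : ZMod p → ℝ := fun x => ∑ y : ZMod p, g (x + φ₁ y) * g (x + φ₂ y) with hTdef
  set D : ZMod p → ℝ := fun x => (p : ℝ)⁻¹ * T x - δ ^ 2 with hDdef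
  have hfg : ∀ x, f x = ((g x : ℝ) : ℂ) := fun x => by
    by_cases h : x ∈ A <;> simp [hf, hgdef, h]
  -- count identity
  have hcount : ((Finset.univ.filter fun xy : ZMod p × ZMod p =>
        xy.1 ∈ A ∧ xy.1 + φ₁ xy.2 ∈ A ∧ xy.1 + φ₂ xy.2 ∈ A).card : ℝ)
      = ∑ x : ZMod p, g x * T x := by
    rw [Finset.card_filter]
    push_cast
    rw [Fintype.sum_prod_type]
    refine Finset.sum_congr rfl fun x _ => ?_
    rw [hTdef]
    simp only []
    rw [Finset.mul_sum]
    refine Finset.sum_congr rfl fun y _ => ?_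
    by_cases h1 : x ∈ A <;> by_cases h2 : x + φ₁ y ∈ A <;> by_cases h3 : x + φ₂ y ∈ A <;>
      simp [hgdef, h1, h2, h3]
  -- convert hbound to a real statement
  have hTf : ∀ x, (∑ y : ZMod p, f (x + φ₁ y) * f (x + φ₂ y)) = ((T x : ℝ) : ℂ) := by
    intro x
    simp only [hfg, hTdef]
    push_cast
    rfl
  have hsumf : (∑ x' : ZMod p, f x') = ((δ * p : ℝ) : ℂ) := by
    simp only [hfg]
    rw [← Complex.ofReal_sum, hgsum]
  have habs : ∀ x : ZMod p,
      ‖(p : ℂ)⁻¹ * (∑ y : ZMod p, f (x + φ₁ y) * f (x + φ₂ y))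
        - ((p : ℂ)⁻¹ * ∑ x' : ZMod p, f x') ^ 2‖ ^ 2 = D x ^ 2 := by
    intro x
    have hexp : (p : ℂ)⁻¹ * (∑ y : ZMod p, f (x + φ₁ y) * f (x + φ₂ y))
        - ((p : ℂ)⁻¹ * ∑ x' : ZMod p, f x') ^ 2 = ((D x : ℝ) : ℂ) := by
      rw [hTf, hsumf, hDdef]
      have hpc : ((p : ℕ) : ℂ) ≠ 0 := by exact_mod_cast hpne
      push_cast
      field_simp
    rw [hexp, Complex.norm_real, Real.norm_eq_abs, sq_abs]
  have habs2 : ∀ x : ZMod p, ‖f x‖ ^ 2 = g x := fun x => by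
    by_cases h : x ∈ A <;> simp [hf, hgdef, h]
  rw [Finset.sum_congr rfl fun x _ => habs x, Finset.sum_congr rfl fun x _ => habs2 x,
    hgsum] at hbound
  have hppinv : (p : ℝ)⁻¹ * (δ * p) = δ := by field_simp
  rw [hppinv] at hbound
  have hδhalf : (δ ^ ((1:ℝ)/2)) ^ 2 = δ := by
    rw [← Real.rpow_natCast (δ ^ ((1:ℝ)/2)) 2, ← Real.rpow_mul hδ0]
    norm_num
  rw [hδhalf] at hbound
  -- now hbound : ((p:ℝ)⁻¹ * ∑ x, D x ^ 2) ^ (1/2) ≤ C * p ^ (-γ) * δ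
  set B : ℝ := C * (p : ℝ) ^ (-γ) * δ with hBdef
  set u : ℝ := (p : ℝ)⁻¹ * ∑ x : ZMod p, D x ^ 2 with hudef
  have hu0 : 0 ≤ u := by
    rw [hudef]
    positivity
  have hB0 : 0 ≤ B := le_trans (Real.rpow_nonneg hu0 _) hbound
  have huB : u ≤ B ^ 2 := by
    have h1 : u = (u ^ ((1:ℝ)/2)) ^ 2 := by
      rw [← Real.rpow_natCast (u ^ ((1:ℝ)/2)) 2, ← Real.rpow_mul hu0]
      norm_num
    rw [h1]
    exact pow_le_pow_left₀ (Real.rpow_nonneg hu0 _) hbound 2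
  have hDsum : ∑ x : ZMod p, D x ^ 2 ≤ B ^ 2 * p := by
    have : ∑ x : ZMod p, D x ^ 2 = p * u := by
      rw [hudef]; field_simp
    rw [this]
    nlinarith [huB, hp]
  -- Cauchy–Schwarz
  have hCS : (∑ x : ZMod p, g x * D x) ^ 2
      ≤ (∑ x : ZMod p, g x ^ 2) * ∑ x : ZMod p, D x ^ 2 :=
    Finset.sum_mul_sq_le_sq_mul_sq _ _ _
  have hgsq : ∑ x : ZMod p, g x ^ 2 = δ * p := by
    rw [← hgsum]
    exact Finset.sum_congr rfl fun x _ => by rcases hg0 x with h | h <;> rw [h] <;> norm_num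
  set E : ℝ := ∑ x : ZMod p, g x * D x with hEdef
  have hE2 : E ^ 2 ≤ δ * p * (B ^ 2 * p) := by
    calc E ^ 2 ≤ (∑ x : ZMod p, g x ^ 2) * ∑ x : ZMod p, D x ^ 2 := hCS
      _ ≤ δ * p * (B ^ 2 * p) := by
          rw [hgsq]
          apply mul_le_mul_of_nonneg_left hDsum
          positivity
  -- decompose the count
  have hS : ∑ x : ZMod p, g x * T x = p * E + δ ^ 3 * p ^ 2 := by
    have hT : ∀ x, T x = p * D x + p * δ ^ 2 := by
      intro x
      rw [hDdef]
      field_simp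
      ring
    calc ∑ x : ZMod p, g x * T x
        = ∑ x : ZMod p, (p * (g x * D x) + p * δ ^ 2 * g x) := by
          refine Finset.sum_congr rfl fun x _ => ?_
          rw [hT x]; ring
      _ = p * E + δ ^ 3 * p ^ 2 := by
          rw [Finset.sum_add_distrib, ← Finset.mul_sum, ← Finset.mul_sum, hgsum, hEdef]
          ring
  have hBδ : B ≤ δ ^ 3 / 2 := by
    rw [hBdef]; nlinarith [hδ]
  -- final bound: p * E ≥ -(δ^3/2) * p^2
  have key : ∀ X M : ℝ, X ^ 2 ≤ M ^ 2 → 0 ≤ M → -M ≤ X := by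
    intro X M h1 h2
    nlinarith [sq_nonneg (X + M)]
  have hPE : -(δ ^ 3 / 2 * (p : ℝ) ^ 2) ≤ (p : ℝ) * E := by
    have hM0 : 0 ≤ δ ^ 3 / 2 * (p : ℝ) ^ 2 := by positivity
    have h2 : δ * B ^ 2 ≤ (δ ^ 3 / 2) ^ 2 := by
      have h3 : B ^ 2 ≤ (δ ^ 3 / 2) ^ 2 := by
        apply pow_le_pow_left₀ hB0 hBδ
      nlinarith [sq_nonneg B]
    have h1 : ((p : ℝ) * E) ^ 2 ≤ (δ ^ 3 / 2 * (p : ℝ) ^ 2) ^ 2 := by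
      calc ((p : ℝ) * E) ^ 2 = (p : ℝ) ^ 2 * E ^ 2 := by ring
        _ ≤ (p : ℝ) ^ 2 * (δ * p * (B ^ 2 * p)) := by
            apply mul_le_mul_of_nonneg_left hE2 (by positivity)
        _ = δ * B ^ 2 * (p : ℝ) ^ 4 := by ring
        _ ≤ (δ ^ 3 / 2) ^ 2 * (p : ℝ) ^ 4 := by
            apply mul_le_mul_of_nonneg_right h2 (by positivity)
        _ = (δ ^ 3 / 2 * (p : ℝ) ^ 2) ^ 2 := by ring
    exact key _ _ h1 hM0
  rw [hcount, hS]
  linarith [hPE]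
end

section
/- Let T be the operator T(g)(x) = ∑_y g(y) K(x,y) · conj(K(x−h, y+h)) for a fixed h ∈ ZMod p and kernel K : ZMod p × ZMod p → ℂ. Suppose (i) |K(x,y)| ≤ C₁ p^{−α} for all x,y, and (ii) there is a set D ⊆ (ZMod p)² such that each row and column of D has at most M elements and for (y,y') ∉ D, |∑_x K(x,y) conj(K(x−h,y+h)) conj(K(x,y')) K(x−h,y'+h)| ≤ C₂ p^{−β}. Then ∑_x |T(g)(x)|² ≤ C·max(p^{1−4α}, p^{1−β}) ∑_y |g(y)|² for a constant C depending on C₁, C₂, M. -/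
open Finset

/-- Finite-field Hörmander-type `L²` bound for
`T(g)(x) = ∑_y g(y) K(x,y) conj(K(x−h,y+h))`: under the single-kernel bound
`|K| ≤ C₁ p^{−α}` and the off-(generalized-)diagonal fourth-moment bound `|I| ≤ C₂ p^{−β}`,
one has `∑ₓ |T(g)(x)|² ≤ C max(p^{1−4α}, p^{1−β}) ∑_y |g(y)|²`,
with `C` depending only on `C₁, C₂, M`. -/
theorem hoermander_L2 (C₁ C₂ : ℝ) (M : ℕ) :
    ∃ C : ℝ, 0 < C ∧
      ∀ (p : ℕ) [Fact p.Prime] (h : ZMod p), h ≠ 0 →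
        ∀ (K : ZMod p → ZMod p → ℂ) (α β : ℝ) (D : Finset (ZMod p × ZMod p)),
          (∀ x y : ZMod p, ‖(K x y)‖ ≤ C₁ * (p : ℝ) ^ (-α)) →
          (∀ y : ZMod p, (D.filter fun q => q.1 = y).card ≤ M) →
          (∀ y' : ZMod p, (D.filter fun q => q.2 = y').card ≤ M) →
          (∀ y y' : ZMod p, (y, y') ∉ D →
            ‖(∑ x : ZMod p,
              K x y * star (K (x - h) (y + h)) * star (K x y') * K (x - h) (y' + h))‖
              ≤ C₂ * (p : ℝ) ^ (-β)) →
          ∀ g : ZMod p → ℂ,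
            ∑ x : ZMod p,
              ‖(∑ y : ZMod p, g y * K x y * star (K (x - h) (y + h)))‖ ^ 2
              ≤ C * max ((p : ℝ) ^ (1 - 4 * α)) ((p : ℝ) ^ (1 - β)) *
                ∑ y : ZMod p, ‖(g y)‖ ^ 2 := by
  refine ⟨(M : ℝ) * C₁ ^ 4 + |C₂| + 1, by positivity, ?_⟩
  intro p _ h hne K α β D hK hrow hcol hI g
  have hp : 0 < p := (Fact.out : p.Prime).pos
  have hp' : (0 : ℝ) < p := by exact_mod_cast hp
  set a : ℝ := C₁ * (p : ℝ) ^ (-α) with ha_def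
  have ha : 0 ≤ a := le_trans (norm_nonneg _) (hK 0 0)
  set Q : ℝ := ∑ y : ZMod p,  ‖(g y)‖ ^ 2 with hQ_def
  have hQ : 0 ≤ Q := Finset.sum_nonneg fun y _ => by positivity
  set J : ZMod p → ZMod p → ℂ := fun y y' => ∑ x : ZMod p,
      K x y * star (K (x - h) (y + h)) * star (K x y') * K (x - h) (y' + h) with hJ_def
  set S : ZMod p → ℂ := fun x => ∑ y : ZMod p, g y * K x y * star (K (x - h) (y + h)) with hS_def
  have habs_star : ∀ z : ℂ,  ‖(star z)‖ = ‖z‖ := fun z => by simp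
  -- Step 1: expand the square
  have expand : ∑ x : ZMod p,  ‖(S x)‖ ^ 2
      = (∑ y : ZMod p, ∑ y' : ZMod p, g y * star (g y') * J y y').re := by
    have e1 : ∀ x,  ‖(S x)‖ ^ 2 = (S x * star (S x)).re := by
      intro x
      rw [← starRingEnd_apply, Complex.mul_conj, Complex.sq_norm]
      simp
    simp only [e1, ← Complex.re_sum]
    congr 1
    have e2 : ∑ x : ZMod p, S x * star (S x)
        = ∑ x : ZMod p, ∑ y : ZMod p, ∑ y' : ZMod p,
            g y * star (g y') *
              (K x y * star (K (x - h) (y + h)) * star (K x y') * K (x - h) (y' + h)) := by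
      refine Finset.sum_congr rfl fun x _ => ?_
      rw [hS_def]
      simp only [star_sum, Finset.sum_mul_sum, star_mul, star_star]
      refine Finset.sum_congr rfl fun y _ => Finset.sum_congr rfl fun y' _ => ?_
      ring
    rw [e2, Finset.sum_comm]
    refine Finset.sum_congr rfl fun y _ => ?_
    rw [Finset.sum_comm]
    refine Finset.sum_congr rfl fun y' _ => ?_
    rw [hJ_def, Finset.mul_sum]
  -- Step 2: pass to absolute values
  have step2 : (∑ y : ZMod p, ∑ y' : ZMod p, g y * star (g y') * J y y').re
      ≤ ∑ q ∈ (univ ×ˢ univ : Finset (ZMod p × ZMod p)),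
           ‖(g q.1)‖ *  ‖(g q.2)‖ *  ‖(J q.1 q.2)‖ := by
    rw [← Finset.sum_product']
    refine le_trans (Complex.re_le_norm _) (le_trans (norm_sum_le _ _) ?_)
    refine Finset.sum_le_sum fun q _ => ?_
    rw [norm_mul, norm_mul]
    simp
  -- Uniform bound on J
  have hJbound : ∀ y y',  ‖(J y y')‖ ≤ p * a ^ 4 := by
    intro y y'
    refine le_trans (norm_sum_le _ _) ?_
    have hterm : ∀ x : ZMod p, 
        ‖(K x y * star (K (x - h) (y + h)) * star (K x y') * K (x - h) (y' + h))‖ ≤ a ^ 4 := by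
      intro x
      rw [norm_mul, norm_mul, norm_mul, habs_star, habs_star]
      have : a ^ 4 = a * a * a * a := by ring
      rw [this]
      gcongr <;> first | exact norm_nonneg _ | exact hK _ _
    calc ∑ x : ZMod p, ‖_‖ ≤ ∑ _x : ZMod p, a ^ 4 :=
          Finset.sum_le_sum fun x _ => hterm x
      _ = p * a ^ 4 := by
          rw [Finset.sum_const, Finset.card_univ, ZMod.card, nsmul_eq_mul]
  -- Diagonal part
  have hDsum : ∑ q ∈ D,  ‖(g q.1)‖ *  ‖(g q.2)‖ ≤ (M : ℝ) * Q := by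
    have key : ∀ q ∈ D,  ‖(g q.1)‖ *  ‖(g q.2)‖
        ≤ ( ‖(g q.1)‖ ^ 2 +  ‖(g q.2)‖ ^ 2) / 2 := fun q _ => by
      nlinarith [sq_nonneg ( ‖(g q.1)‖ -  ‖(g q.2)‖)]
    refine le_trans (Finset.sum_le_sum key) ?_
    have fib : ∀ (π : ZMod p × ZMod p → ZMod p),
        (∀ y, ((D.filter fun q => π q = y)).card ≤ M) →
        ∑ q ∈ D,  ‖(g (π q))‖ ^ 2 ≤ (M : ℝ) * Q := by
      intro π hπ
      rw [← Finset.sum_fiberwise D π (fun q =>  ‖(g (π q))‖ ^ 2),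
        hQ_def, Finset.mul_sum]
      refine Finset.sum_le_sum fun y _ => ?_
      have e : ∑ q ∈ D.filter (fun q => π q = y),  ‖(g (π q))‖ ^ 2
          = ((D.filter fun q => π q = y).card : ℝ) *  ‖(g y)‖ ^ 2 := by
        rw [Finset.sum_congr rfl (fun q hq => by rw [(Finset.mem_filter.mp hq).2]),
          Finset.sum_const, nsmul_eq_mul]
      rw [e]
      have hc : ((D.filter fun q => π q = y).card : ℝ) ≤ (M : ℝ) := by exact_mod_cast hπ y
      exact mul_le_mul_of_nonneg_right hc (by positivity)
    have h1 := fib Prod.fst hrow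
    have h2 := fib Prod.snd hcol
    calc ∑ q ∈ D, ( ‖(g q.1)‖ ^ 2 +  ‖(g q.2)‖ ^ 2) / 2
        = ((∑ q ∈ D,  ‖(g q.1)‖ ^ 2) + ∑ q ∈ D,  ‖(g q.2)‖ ^ 2) / 2 := by
          rw [← Finset.sum_add_distrib, Finset.sum_div]
      _ ≤ (((M : ℝ) * Q) + (M : ℝ) * Q) / 2 := by
          apply div_le_div_of_nonneg_right ?_ (by norm_num)
          exact add_le_add h1 h2
      _ = (M : ℝ) * Q := by ring
  -- split the pair sum
  set F : ZMod p × ZMod p → ℝ := fun q =>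
     ‖(g q.1)‖ *  ‖(g q.2)‖ *  ‖(J q.1 q.2)‖ with hF_def
  have hsplit : ∑ q ∈ (univ ×ˢ univ : Finset (ZMod p × ZMod p)), F q
      = ∑ q ∈ (univ ×ˢ univ : Finset (ZMod p × ZMod p)).filter (· ∈ D), F q
        + ∑ q ∈ (univ ×ˢ univ : Finset (ZMod p × ZMod p)).filter (· ∉ D), F q :=
    (Finset.sum_filter_add_sum_filter_not _ _ _).symm
  have hfil : (univ ×ˢ univ : Finset (ZMod p × ZMod p)).filter (· ∈ D) = D := by
    ext q; simp
  have partD : ∑ q ∈ (univ ×ˢ univ : Finset (ZMod p × ZMod p)).filter (· ∈ D), F q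
      ≤ ((p : ℝ) * a ^ 4) * ((M : ℝ) * Q) := by
    rw [hfil]
    calc ∑ q ∈ D, F q
        ≤ ∑ q ∈ D,  ‖(g q.1)‖ *  ‖(g q.2)‖ * ((p : ℝ) * a ^ 4) := by
          refine Finset.sum_le_sum fun q _ => ?_
          exact mul_le_mul_of_nonneg_left (hJbound q.1 q.2) (by positivity)
      _ = ((p : ℝ) * a ^ 4) * ∑ q ∈ D,  ‖(g q.1)‖ *  ‖(g q.2)‖ := by
          rw [← Finset.sum_mul]; ring
      _ ≤ ((p : ℝ) * a ^ 4) * ((M : ℝ) * Q) :=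
          mul_le_mul_of_nonneg_left hDsum (by positivity)
  have hCS : ∑ q ∈ (univ ×ˢ univ : Finset (ZMod p × ZMod p)),
       ‖(g q.1)‖ *  ‖(g q.2)‖ ≤ (p : ℝ) * Q := by
    have e : ∑ q ∈ (univ ×ˢ univ : Finset (ZMod p × ZMod p)),
         ‖(g q.1)‖ *  ‖(g q.2)‖
        = (∑ y : ZMod p,  ‖(g y)‖) ^ 2 := by
      rw [Finset.sum_product, sq, Finset.sum_mul_sum]
    rw [e]
    calc (∑ y : ZMod p,  ‖(g y)‖) ^ 2
        ≤ (univ : Finset (ZMod p)).card * ∑ y : ZMod p,  ‖(g y)‖ ^ 2 :=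
          sq_sum_le_card_mul_sum_sq
      _ = (p : ℝ) * Q := by rw [Finset.card_univ, ZMod.card, hQ_def]
  set b : ℝ := max C₂ 0 * (p : ℝ) ^ (-β) with hb_def
  have hb : 0 ≤ b := by positivity
  have partOff : ∑ q ∈ (univ ×ˢ univ : Finset (ZMod p × ZMod p)).filter (· ∉ D), F q
      ≤ b * ((p : ℝ) * Q) := by
    calc ∑ q ∈ (univ ×ˢ univ : Finset (ZMod p × ZMod p)).filter (· ∉ D), F q
        ≤ ∑ q ∈ (univ ×ˢ univ : Finset (ZMod p × ZMod p)).filter (· ∉ D),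
             ‖(g q.1)‖ *  ‖(g q.2)‖ * b := by
          refine Finset.sum_le_sum fun q hq => ?_
          have hqD : q ∉ D := (Finset.mem_filter.mp hq).2
          have hq' : (q.1, q.2) ∉ D := by simpa using hqD
          have hJle :  ‖(J q.1 q.2)‖ ≤ b := by
            refine le_trans (hI q.1 q.2 hq') ?_
            rw [hb_def]
            exact mul_le_mul_of_nonneg_right (le_max_left _ _) (by positivity)
          exact mul_le_mul_of_nonneg_left hJle (by positivity)
      _ ≤ ∑ q ∈ (univ ×ˢ univ : Finset (ZMod p × ZMod p)),
             ‖(g q.1)‖ *  ‖(g q.2)‖ * b :=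
          Finset.sum_le_sum_of_subset_of_nonneg (Finset.filter_subset _ _)
            (fun q _ _ => by positivity)
      _ = (∑ q ∈ (univ ×ˢ univ : Finset (ZMod p × ZMod p)),
             ‖(g q.1)‖ *  ‖(g q.2)‖) * b := by
          rw [Finset.sum_mul]
      _ ≤ ((p : ℝ) * Q) * b := mul_le_mul_of_nonneg_right hCS hb
      _ = b * ((p : ℝ) * Q) := by ring
  -- put everything together
  have total : ∑ x : ZMod p,  ‖(S x)‖ ^ 2
      ≤ ((p : ℝ) * a ^ 4) * ((M : ℝ) * Q) + b * ((p : ℝ) * Q) := by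
    rw [expand]
    calc (∑ y : ZMod p, ∑ y' : ZMod p, g y * star (g y') * J y y').re
        ≤ ∑ q ∈ (univ ×ˢ univ : Finset (ZMod p × ZMod p)), F q := step2
      _ = _ := hsplit
      _ ≤ _ := add_le_add partD partOff
  -- arithmetic with rpow
  have e4 : (p : ℝ) * a ^ 4 = C₁ ^ 4 * (p : ℝ) ^ (1 - 4 * α) := by
    rw [ha_def, mul_pow, ← Real.rpow_natCast ((p : ℝ) ^ (-α)) 4, ← Real.rpow_mul hp'.le,
      show (1 - 4 * α) = 1 + (-α * (4 : ℕ)) by push_cast; ring, Real.rpow_add hp',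
      Real.rpow_one]
    ring
  have e5 : b * ((p : ℝ) * Q) = max C₂ 0 * ((p : ℝ) ^ (1 - β) * Q) := by
    rw [hb_def, show (1 - β) = 1 + (-β) by ring, Real.rpow_add hp', Real.rpow_one]
    ring
  set P₁ : ℝ := (p : ℝ) ^ (1 - 4 * α) with hP1
  set P₂ : ℝ := (p : ℝ) ^ (1 - β) with hP2
  have hP1pos : 0 < P₁ := Real.rpow_pos_of_pos hp' _
  have hP2pos : 0 < P₂ := Real.rpow_pos_of_pos hp' _
  have hmaxC : max C₂ 0 ≤ |C₂| + 1 :=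
    le_trans (max_le (le_abs_self _) (abs_nonneg _)) (by linarith)
  calc ∑ x : ZMod p,  ‖(S x)‖ ^ 2
      ≤ ((p : ℝ) * a ^ 4) * ((M : ℝ) * Q) + b * ((p : ℝ) * Q) := total
    _ = ((M : ℝ) * C₁ ^ 4) * (P₁ * Q) + max C₂ 0 * (P₂ * Q) := by
        rw [e4, e5]; ring
    _ ≤ ((M : ℝ) * C₁ ^ 4) * (max P₁ P₂ * Q) + (|C₂| + 1) * (max P₁ P₂ * Q) := by
        refine add_le_add ?_ ?_
        · exact mul_le_mul_of_nonneg_left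
            (mul_le_mul_of_nonneg_right (le_max_left _ _) hQ) (by positivity)
        · exact mul_le_mul hmaxC (mul_le_mul_of_nonneg_right (le_max_right _ _) hQ)
            (by positivity) (by positivity)
    _ = ((M : ℝ) * C₁ ^ 4 + |C₂| + 1) * max P₁ P₂ * Q := by ring
end

section
/- Under the hypotheses of the previous operator bound, the bilinear form satisfies |∑_{u,v} F(u) G(v) K(u,v) conj(K(u−h, v+h))| ≤ C·max(p^{1−4α}, p^{1−β})^{1/2} ·(∑_u |F(u)|²)^{1/2} (∑_v |G(v)|²)^{1/2} for all F, G : ZMod p → ℂ. -/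
open Finset

set_option maxHeartbeats 2000000 in
/-- Bilinear form estimate (Proposition 2.1-type): under the single-kernel bound
`|K| ≤ C₁ p^{−α}` and the off-(generalized-)diagonal fourth-moment bound `|I| ≤ C₂ p^{−β}`,
`|∑_{u,v} F(u) G(v) K(u,v) conj(K(u−h,v+h))| ≤ C max(p^{1−4α}, p^{1−β})^{1/2} ‖F‖_{ℓ²} ‖G‖_{ℓ²}`. -/
theorem bilinear_form_estimate (C₁ C₂ : ℝ) (M : ℕ) :
    ∃ C : ℝ, 0 < C ∧
      ∀ (p : ℕ) [Fact p.Prime] (h : ZMod p), h ≠ 0 →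
        ∀ (K : ZMod p → ZMod p → ℂ) (α β : ℝ) (D : Finset (ZMod p × ZMod p)),
          (∀ x y : ZMod p, ‖K x y‖ ≤ C₁ * (p : ℝ) ^ (-α)) →
          (∀ y : ZMod p, (D.filter fun q => q.1 = y).card ≤ M) →
          (∀ y' : ZMod p, (D.filter fun q => q.2 = y').card ≤ M) →
          (∀ y y' : ZMod p, (y, y') ∉ D →
            ‖∑ x : ZMod p,
              K x y * star (K (x - h) (y + h)) * star (K x y') * K (x - h) (y' + h)‖
              ≤ C₂ * (p : ℝ) ^ (-β)) →
          ∀ F G : ZMod p → ℂ,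
            ‖∑ u : ZMod p, ∑ v : ZMod p,
                F u * G v * K u v * star (K (u - h) (v + h))‖
              ≤ C * (max ((p : ℝ) ^ (1 - 4 * α)) ((p : ℝ) ^ (1 - β))) ^ ((1 : ℝ)/2) *
                (∑ u : ZMod p, ‖F u‖ ^ 2) ^ ((1 : ℝ)/2) *
                (∑ v : ZMod p, ‖G v‖ ^ 2) ^ ((1 : ℝ)/2) := by
  set Csq : ℝ := |C₂| + (|C₁| + 1) ^ 4 * (M + 1) + 1 with hCsq
  have hCsqpos : 0 < Csq := by positivity
  refine ⟨Real.sqrt Csq, Real.sqrt_pos.2 hCsqpos, ?_⟩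
  intro p _ h _ K α β D hK hrow hcol hI F G
  have hp : 0 < (p : ℝ) := by exact_mod_cast (Fact.out : p.Prime).pos
  have hC₁ : 0 ≤ C₁ := by
    have h1 := (norm_nonneg (K 0 0)).trans (hK 0 0)
    have h2 : 0 < (p : ℝ) ^ (-α) := Real.rpow_pos_of_pos hp _
    nlinarith
  -- notation
  set q : ℝ := (p : ℝ) with hq
  set T : ZMod p → ZMod p → ℂ := fun u v => K u v * star (K (u - h) (v + h)) with hT
  set S : ZMod p → ℂ := fun u => ∑ v, G v * T u v with hS
  set a : ZMod p → ℝ := fun u => ‖F u‖ with ha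
  set b : ZMod p → ℝ := fun v => ‖G v‖ with hb
  set SF : ℝ := ∑ u, a u ^ 2 with hSF
  set SG : ℝ := ∑ v, b v ^ 2 with hSG
  have hSFnn : 0 ≤ SF := Finset.sum_nonneg fun _ _ => by positivity
  have hSGnn : 0 ≤ SG := Finset.sum_nonneg fun _ _ => by positivity
  set mx : ℝ := max (q ^ (1 - 4 * α)) (q ^ (1 - β)) with hmx
  have hmxpos : 0 < mx := lt_max_of_lt_left (Real.rpow_pos_of_pos hp _)
  set J : ZMod p → ZMod p → ℂ := fun v v' => ∑ u, T u v * star (T u v') with hJ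
  -- Step A: |B| ≤ ∑ a u * |S u|
  have stepA : ‖∑ u : ZMod p, ∑ v : ZMod p,
      F u * G v * K u v * star (K (u - h) (v + h))‖ ≤ ∑ u, a u * ‖S u‖ := by
    calc ‖∑ u : ZMod p, ∑ v : ZMod p,
        F u * G v * K u v * star (K (u - h) (v + h))‖
        = ‖∑ u, F u * S u‖ := by
          congr 1
          refine Finset.sum_congr rfl fun u _ => ?_
          rw [hS, Finset.mul_sum]
          exact Finset.sum_congr rfl fun v _ => by rw [hT]; ring
      _ ≤ ∑ u, ‖F u * S u‖ := norm_sum_le _ _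
      _ = ∑ u, a u * ‖S u‖ := by
          exact Finset.sum_congr rfl fun u _ => norm_mul _ _
  -- Step B: Cauchy-Schwarz
  have stepB : ∑ u, a u * ‖S u‖
      ≤ Real.sqrt SF * Real.sqrt (∑ u, ‖S u‖ ^ 2) :=
    Real.sum_mul_le_sqrt_mul_sqrt _ _ _
  -- the fourth moment identity
  have hQid : ∑ u, ‖S u‖ ^ 2
      = (∑ v, ∑ v', G v * star (G v') * J v v').re := by
    have e0 : ∀ u, S u * star (S u)
        = ∑ v, ∑ v', (G v * star (G v')) * (T u v * star (T u v')) := by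
      intro u
      rw [hS]
      simp only [star_sum, Finset.sum_mul_sum, star_mul']
      exact Finset.sum_congr rfl fun v _ => Finset.sum_congr rfl fun v' _ => by ring
    have e1 : ∑ u, S u * star (S u)
        = ∑ v, ∑ v', G v * star (G v') * J v v' := by
      calc ∑ u, S u * star (S u)
          = ∑ u, ∑ v, ∑ v', G v * star (G v') * (T u v * star (T u v')) :=
            Finset.sum_congr rfl fun u _ => e0 u
        _ = ∑ v, ∑ u, ∑ v', G v * star (G v') * (T u v * star (T u v')) :=
            Finset.sum_comm
        _ = ∑ v, ∑ v', ∑ u, G v * star (G v') * (T u v * star (T u v')) :=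
            Finset.sum_congr rfl fun v _ => Finset.sum_comm
        _ = ∑ v, ∑ v', G v * star (G v') * J v v' := by
            refine Finset.sum_congr rfl fun v _ => Finset.sum_congr rfl fun v' _ => ?_
            rw [hJ, Finset.mul_sum]
    rw [← e1, Complex.re_sum]
    refine Finset.sum_congr rfl fun u _ => ?_
    rw [Complex.star_def, Complex.mul_conj, Complex.ofReal_re, Complex.sq_norm]
  -- bound on J
  have hJbound : ∀ v v' : ZMod p, ‖J v v'‖
      ≤ (if (v, v') ∈ D then C₁ ^ 4 * q ^ (1 - 4 * α) else 0) + |C₂| * q ^ (-β) := by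
    intro v v'
    have hJeq : J v v' = ∑ x : ZMod p,
        K x v * star (K (x - h) (v + h)) * star (K x v') * K (x - h) (v' + h) := by
      refine Finset.sum_congr rfl fun x _ => ?_
      simp only [hT, star_mul', star_star]; ring
    by_cases hD : (v, v') ∈ D
    · have htriv : ‖J v v'‖ ≤ C₁ ^ 4 * q ^ (1 - 4 * α) := by
        calc ‖J v v'‖ ≤ ∑ u : ZMod p, ‖T u v * star (T u v')‖ :=
              norm_sum_le _ _
          _ ≤ ∑ _u : ZMod p, (C₁ * q ^ (-α)) ^ 4 := by
              refine Finset.sum_le_sum fun u _ => ?_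
              have h1 := hK u v
              have h2 := hK (u - h) (v + h)
              have h3 := hK u v'
              have h4 := hK (u - h) (v' + h)
              have habs : ‖T u v * star (T u v')‖
                  = ‖K u v‖ * ‖K (u-h) (v+h)‖ *
                    (‖K u v'‖ * ‖K (u-h) (v'+h)‖) := by
                simp only [hT, Complex.star_def, norm_mul, Complex.norm_conj]
              have hnn : ∀ z : ℂ, 0 ≤ ‖z‖ := fun z => norm_nonneg z
              have hcb : (0:ℝ) ≤ C₁ * q ^ (-α) := mul_nonneg hC₁ (Real.rpow_pos_of_pos hp _).le
              have m1 : ‖K u v‖ * ‖K (u-h) (v+h)‖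
                  ≤ (C₁ * q ^ (-α)) * (C₁ * q ^ (-α)) :=
                mul_le_mul h1 h2 (hnn _) hcb
              have m2 : ‖K u v'‖ * ‖K (u-h) (v'+h)‖
                  ≤ (C₁ * q ^ (-α)) * (C₁ * q ^ (-α)) :=
                mul_le_mul h3 h4 (hnn _) hcb
              rw [habs, show (C₁ * q^(-α))^4
                  = ((C₁*q^(-α))*(C₁*q^(-α)))*((C₁*q^(-α))*(C₁*q^(-α))) from by ring]
              exact mul_le_mul m1 m2 (mul_nonneg (hnn _) (hnn _))
                (mul_nonneg hcb hcb)
          _ = (p : ℝ) * (C₁ * q ^ (-α)) ^ 4 := by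
              rw [Finset.sum_const, Finset.card_univ, ZMod.card, nsmul_eq_mul]
          _ = C₁ ^ 4 * q ^ (1 - 4 * α) := by
              rw [mul_pow, ← Real.rpow_natCast (q ^ (-α)) 4, ← Real.rpow_mul hp.le]
              rw [show (1 : ℝ) - 4 * α = 1 + (-α * 4) by ring, Real.rpow_add hp,
                Real.rpow_one]
              push_cast
              ring
      rw [if_pos hD]
      have : 0 ≤ |C₂| * q ^ (-β) := by positivity
      linarith
    · rw [if_neg hD, zero_add, hJeq]
      refine (hI v v' hD).trans ?_
      have : 0 < q ^ (-β) := Real.rpow_pos_of_pos hp _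
      nlinarith [le_abs_self C₂]
  -- Step C: the Q bound
  have stepC : ∑ u, ‖S u‖ ^ 2 ≤ Csq * mx * SG := by
    have hble : ∑ u, ‖S u‖ ^ 2
        ≤ ∑ v, ∑ v', b v * b v' * ‖J v v'‖ := by
      rw [hQid]
      calc (∑ v, ∑ v', G v * star (G v') * J v v').re
          ≤ ‖∑ v, ∑ v', G v * star (G v') * J v v'‖ := Complex.re_le_norm _
        _ ≤ ∑ v, ‖∑ v', G v * star (G v') * J v v'‖ := norm_sum_le _ _
        _ ≤ ∑ v, ∑ v', ‖G v * star (G v') * J v v'‖ :=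
            Finset.sum_le_sum fun v _ => norm_sum_le _ _
        _ = ∑ v, ∑ v', b v * b v' * ‖J v v'‖ := by
            refine Finset.sum_congr rfl fun v _ => Finset.sum_congr rfl fun v' _ => ?_
            simp only [norm_mul, Complex.star_def, Complex.norm_conj, hb]
    have hsplit : ∑ v, ∑ v', b v * b v' * ‖J v v'‖
        ≤ (∑ v, ∑ v', b v * b v' *
            ((if (v, v') ∈ D then C₁ ^ 4 * q ^ (1 - 4 * α) else 0) + |C₂| * q ^ (-β))) :=
      Finset.sum_le_sum fun v _ => Finset.sum_le_sum fun v' _ =>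
        mul_le_mul_of_nonneg_left (hJbound v v') (by positivity)
    have hexpand : (∑ v, ∑ v', b v * b v' *
            ((if (v, v') ∈ D then C₁ ^ 4 * q ^ (1 - 4 * α) else 0) + |C₂| * q ^ (-β)))
        = (∑ z ∈ D, b z.1 * b z.2) * (C₁ ^ 4 * q ^ (1 - 4 * α))
          + (∑ v, b v) ^ 2 * (|C₂| * q ^ (-β)) := by
      simp only [mul_add, Finset.sum_add_distrib]
      congr 1
      · rw [← Finset.sum_product']
        rw [show (∑ z ∈ Finset.univ ×ˢ Finset.univ, b z.1 * b z.2 *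
            (if z ∈ D then C₁ ^ 4 * q ^ (1 - 4 * α) else 0))
          = ∑ z ∈ Finset.univ ×ˢ Finset.univ,
            (if z ∈ D then b z.1 * b z.2 * (C₁ ^ 4 * q ^ (1 - 4 * α)) else 0) from
          Finset.sum_congr rfl fun z _ => by split <;> simp]
        rw [Finset.sum_ite_mem, Finset.sum_mul]
        congr 1
        ext z
        simp [Finset.mem_product]
      · rw [sq, Finset.sum_mul_sum]
        simp only [Finset.sum_mul]
    -- bound the D part
    have hDpart : ∑ z ∈ D, b z.1 * b z.2 ≤ (M : ℝ) * SG := by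
      have h1 : ∑ z ∈ D, b z.1 * b z.2
          ≤ (∑ z ∈ D, b z.1 ^ 2) / 2 + (∑ z ∈ D, b z.2 ^ 2) / 2 := by
        have := Finset.sum_le_sum (s := D) (f := fun z => b z.1 * b z.2)
          (g := fun z => b z.1 ^ 2 / 2 + b z.2 ^ 2 / 2)
          (fun z _ => by nlinarith [sq_nonneg (b z.1 - b z.2)])
        simpa [Finset.sum_add_distrib, Finset.sum_div] using this
      have h2 : ∑ z ∈ D, b z.1 ^ 2 ≤ (M : ℝ) * SG := by
        rw [← Finset.sum_fiberwise D (fun z => z.1) (fun z => b z.1 ^ 2), hSG,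
          Finset.mul_sum]
        refine Finset.sum_le_sum fun y _ => ?_
        calc ∑ z ∈ D.filter (fun z => z.1 = y), b z.1 ^ 2
            = ∑ z ∈ D.filter (fun z => z.1 = y), b y ^ 2 :=
              Finset.sum_congr rfl fun z hz => by rw [(Finset.mem_filter.1 hz).2]
          _ = (D.filter (fun z => z.1 = y)).card * b y ^ 2 := by
              rw [Finset.sum_const, nsmul_eq_mul]
          _ ≤ (M : ℝ) * b y ^ 2 := by
              have hc : ((D.filter (fun z => z.1 = y)).card : ℝ) ≤ (M : ℝ) := by
                exact_mod_cast hrow y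
              exact mul_le_mul_of_nonneg_right hc (sq_nonneg _)
      have h3 : ∑ z ∈ D, b z.2 ^ 2 ≤ (M : ℝ) * SG := by
        rw [← Finset.sum_fiberwise D (fun z => z.2) (fun z => b z.2 ^ 2), hSG,
          Finset.mul_sum]
        refine Finset.sum_le_sum fun y _ => ?_
        calc ∑ z ∈ D.filter (fun z => z.2 = y), b z.2 ^ 2
            = ∑ z ∈ D.filter (fun z => z.2 = y), b y ^ 2 :=
              Finset.sum_congr rfl fun z hz => by rw [(Finset.mem_filter.1 hz).2]
          _ = (D.filter (fun z => z.2 = y)).card * b y ^ 2 := by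
              rw [Finset.sum_const, nsmul_eq_mul]
          _ ≤ (M : ℝ) * b y ^ 2 := by
              have hc : ((D.filter (fun z => z.2 = y)).card : ℝ) ≤ (M : ℝ) := by
                exact_mod_cast hcol y
              exact mul_le_mul_of_nonneg_right hc (sq_nonneg _)
      linarith
    -- bound the off part
    have hoff : (∑ v, b v) ^ 2 ≤ (p : ℝ) * SG := by
      have h := sq_sum_le_card_mul_sum_sq (s := (Finset.univ : Finset (ZMod p))) (f := b)
      rwa [Finset.card_univ, ZMod.card] at h
    -- put together
    have hq1 : q * q ^ (-β) = q ^ (1 - β) := by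
      rw [show (1 : ℝ) - β = 1 + (-β) by ring, Real.rpow_add hp, Real.rpow_one]
    have hC₁4 : C₁ ^ 4 ≤ (|C₁| + 1) ^ 4 := by
      have : C₁ ≤ |C₁| + 1 := by nlinarith [le_abs_self C₁]
      exact pow_le_pow_left₀ hC₁ this 4
    have hM : (M : ℝ) ≤ (M : ℝ) + 1 := by linarith
    have h1le : q ^ (1 - 4*α) ≤ mx := le_max_left _ _
    have h2le : q ^ (1 - β) ≤ mx := le_max_right _ _
    have hr1 : 0 < q ^ (1 - 4*α) := Real.rpow_pos_of_pos hp _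
    have hr2 : 0 < q ^ (-β) := Real.rpow_pos_of_pos hp _
    calc ∑ u, ‖S u‖ ^ 2
        ≤ (∑ z ∈ D, b z.1 * b z.2) * (C₁ ^ 4 * q ^ (1 - 4 * α))
          + (∑ v, b v) ^ 2 * (|C₂| * q ^ (-β)) := by
          rw [← hexpand]; exact hble.trans hsplit
      _ ≤ ((M : ℝ) * SG) * (C₁ ^ 4 * q ^ (1 - 4 * α))
          + ((p : ℝ) * SG) * (|C₂| * q ^ (-β)) := by
          gcongr <;> positivity
      _ = (C₁ ^ 4 * (M : ℝ)) * q ^ (1 - 4 * α) * SG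
          + |C₂| * q ^ (1 - β) * SG := by rw [← hq1]; ring
      _ ≤ ((|C₁| + 1) ^ 4 * ((M : ℝ) + 1)) * mx * SG + |C₂| * mx * SG := by
          gcongr <;>
            first
              | exact mul_le_mul hC₁4 hM (Nat.cast_nonneg M) (by positivity)
              | positivity
              | assumption
      _ ≤ Csq * mx * SG := by
          have hms : 0 ≤ mx * SG := mul_nonneg hmxpos.le hSGnn
          have e2 : ((|C₁| + 1) ^ 4 * ((M : ℝ) + 1)) * mx * SG + |C₂| * mx * SG
              = (|C₂| + (|C₁| + 1) ^ 4 * ((M : ℝ) + 1)) * (mx * SG) := by ring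
          have e3 : Csq * mx * SG
              = (|C₂| + (|C₁| + 1) ^ 4 * ((M : ℝ) + 1)) * (mx * SG) + mx * SG := by
            rw [hCsq]; push_cast; ring
          rw [e2, e3]
          linarith
  -- finish
  have stepD : Real.sqrt (∑ u, ‖S u‖ ^ 2)
      ≤ Real.sqrt Csq * mx ^ ((1:ℝ)/2) * SG ^ ((1:ℝ)/2) := by
    calc Real.sqrt (∑ u, ‖S u‖ ^ 2) ≤ Real.sqrt (Csq * mx * SG) :=
        Real.sqrt_le_sqrt stepC
      _ = Real.sqrt Csq * Real.sqrt mx * Real.sqrt SG := by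
          rw [Real.sqrt_mul (by positivity), Real.sqrt_mul hCsqpos.le]
      _ = Real.sqrt Csq * mx ^ ((1:ℝ)/2) * SG ^ ((1:ℝ)/2) := by
          rw [Real.rpow_def_of_pos hmxpos, ← Real.rpow_def_of_pos hmxpos,
            ← Real.sqrt_eq_rpow, ← Real.sqrt_eq_rpow]
  have hSFr : Real.sqrt SF = SF ^ ((1:ℝ)/2) := Real.sqrt_eq_rpow SF
  calc ‖∑ u : ZMod p, ∑ v : ZMod p,
        F u * G v * K u v * star (K (u - h) (v + h))‖
      ≤ Real.sqrt SF * Real.sqrt (∑ u, ‖S u‖ ^ 2) := stepA.trans stepB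
    _ ≤ Real.sqrt SF * (Real.sqrt Csq * mx ^ ((1:ℝ)/2) * SG ^ ((1:ℝ)/2)) := by
        gcongr
    _ = Real.sqrt Csq * mx ^ ((1:ℝ)/2) * SF ^ ((1:ℝ)/2) * SG ^ ((1:ℝ)/2) := by
        rw [hSFr]; ring
end

section
/- Let p > 2 be prime, h ∈ (ZMod p)*, and let K(x,y) = p⁻¹ ∑_z e_p(xz + yz²) for y ≠ 0, K(x,0) = 0. Then for y, y' with y ≠ y' and y, y', y+h, y'+h all nonzero, the sum I = ∑_x K(x,y)·conj(K(x−h, y+h))·conj(K(x,y'))·K(x−h, y'+h) satisfies |I| ≤ p^{−3/2}. -/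
open Finset

/-- `e_p(x) = exp(2πi x/p)` for `x ∈ ZMod p`. -/
noncomputable def ep (p : ℕ) (x : ZMod p) : ℂ :=
  Complex.exp (2 * Real.pi * Complex.I * ((x.val : ℂ) / (p : ℂ)))

/-- The quadratic Gauss sum kernel: `K(x,y) = p⁻¹ ∑_z e_p(xz + yz²)` for `y ≠ 0`, and `0` else. -/
noncomputable def Kquad (p : ℕ) [Fact p.Prime] (x y : ZMod p) : ℂ :=
  if y = 0 then 0 else (p : ℂ)⁻¹ * ∑ z : ZMod p, ep p (x * z + y * z ^ 2)

section Aux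

variable {p : ℕ} [Fact p.Prime]

lemma ep_eq_std (x : ZMod p) : ep p x = ZMod.stdAddChar x := by
  haveI : NeZero p := ⟨(Fact.out : p.Prime).ne_zero⟩
  rw [ZMod.stdAddChar_apply, ZMod.toCircle_apply, ep]
  congr 1; ring

lemma ep_add' (a b : ZMod p) : ep p (a + b) = ep p a * ep p b := by
  simp only [ep_eq_std]; exact AddChar.map_add_eq_mul _ a b

lemma ep_zero' : ep p (0 : ZMod p) = 1 := by
  simp only [ep_eq_std]; exact AddChar.map_zero_eq_one _

lemma abs_ep' (a : ZMod p) : ‖ep p a‖ = 1 := by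
  rw [ep_eq_std, ZMod.stdAddChar_apply]; exact Circle.norm_coe _

lemma star_ep' (a : ZMod p) : star (ep p a) = ep p (-a) := by
  have h1 : ep p a * ep p (-a) = 1 := by rw [← ep_add']; simp [ep_zero']
  have h2 : (ep p a)⁻¹ = ep p (-a) := (eq_inv_of_mul_eq_one_right h1).symm
  rw [← h2, Complex.inv_def, Complex.normSq_eq_norm_sq, abs_ep']
  simp [Complex.star_def]

lemma ep_ne_one' {a : ZMod p} (ha : a ≠ 0) : ep p a ≠ 1 := by
  haveI : NeZero p := ⟨(Fact.out : p.Prime).ne_zero⟩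
  rw [ep_eq_std]
  intro hcon
  apply ha
  have : ZMod.stdAddChar a = ZMod.stdAddChar (0 : ZMod p) := by
    rw [hcon, AddChar.map_zero_eq_one]
  exact ZMod.injective_stdAddChar this

lemma sum_ep_lin (c : ZMod p) : ∑ w : ZMod p, ep p (c * w) = if c = 0 then (p : ℂ) else 0 := by
  haveI : NeZero p := ⟨(Fact.out : p.Prime).ne_zero⟩
  split_ifs with hc
  · simp [hc, ep_zero', Finset.card_univ, ZMod.card]
  · have key : ep p c * ∑ w : ZMod p, ep p (c * w) = ∑ w : ZMod p, ep p (c * w) := by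
      rw [Finset.mul_sum]
      refine Fintype.sum_equiv (Equiv.addLeft 1) _ _ fun w => ?_
      rw [← ep_add']
      congr 1
      simp [mul_add, mul_one]
    by_contra hS
    exact ep_ne_one' hc (mul_right_cancel₀ hS (by rw [key, one_mul]))

lemma twoNZ (hp : 2 < p) : (2 : ZMod p) ≠ 0 := by
  haveI : NeZero p := ⟨(Fact.out : p.Prime).ne_zero⟩
  have : ((2 : ℕ) : ZMod p) = (2 : ZMod p) := by norm_cast
  rw [← this, Ne, ZMod.natCast_eq_zero_iff]
  intro hdvd
  exact absurd (Nat.le_of_dvd (by norm_num) hdvd) (by omega)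

lemma fourNZ (hp : 2 < p) : (4 : ZMod p) ≠ 0 := by
  have h2 := twoNZ hp
  have : (4 : ZMod p) = 2 * 2 := by norm_num
  rw [this]; exact mul_ne_zero h2 h2

lemma abs_quad_sum (hp : 2 < p) (A B : ZMod p) (hA : A ≠ 0) :
    ‖∑ x : ZMod p, ep p (A * x ^ 2 + B * x)‖ = Real.sqrt p := by
  set S := ∑ x : ZMod p, ep p (A * x ^ 2 + B * x) with hS
  have hstar : star S = ∑ w : ZMod p, ep p (-(A * w ^ 2 + B * w)) := by
    rw [hS, star_sum]
    exact Finset.sum_congr rfl fun w _ => star_ep' _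
  have key : star S * S = (p : ℂ) := by
    rw [hstar, hS, Finset.sum_mul_sum]
    have hrow : ∀ w : ZMod p,
        ∑ x : ZMod p, ep p (-(A * w ^ 2 + B * w)) * ep p (A * x ^ 2 + B * x)
          = ∑ u : ZMod p, ep p (A * u ^ 2 + B * u) * ep p ((2 * A * u) * w) := by
      intro w
      refine (Fintype.sum_equiv (Equiv.addLeft w) _ _ fun u => ?_).symm
      rw [← ep_add', ← ep_add']
      congr 1
      show A * u ^ 2 + B * u + 2 * A * u * w = -(A * w ^ 2 + B * w) + (A * (w + u) ^ 2 + B * (w + u))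
      ring
    calc ∑ w : ZMod p, ∑ x : ZMod p, ep p (-(A * w ^ 2 + B * w)) * ep p (A * x ^ 2 + B * x)
        = ∑ w : ZMod p, ∑ u : ZMod p, ep p (A * u ^ 2 + B * u) * ep p ((2 * A * u) * w) := by
          exact Finset.sum_congr rfl fun w _ => hrow w
      _ = ∑ u : ZMod p, ep p (A * u ^ 2 + B * u) * ∑ w : ZMod p, ep p ((2 * A * u) * w) := by
          rw [Finset.sum_comm]
          exact Finset.sum_congr rfl fun u _ => (Finset.mul_sum _ _ _).symm
      _ = ∑ u : ZMod p, ep p (A * u ^ 2 + B * u) * (if 2 * A * u = 0 then (p : ℂ) else 0) := by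
          exact Finset.sum_congr rfl fun u _ => by rw [sum_ep_lin]
      _ = (p : ℂ) := by
          rw [Fintype.sum_eq_single (0 : ZMod p)]
          · simp [ep_zero']
          · intro u hu
            rw [if_neg, mul_zero]
            exact mul_ne_zero (mul_ne_zero (twoNZ hp) hA) hu
  have hnorm : Complex.normSq S = (p : ℝ) := by
    have h2 : ((Complex.normSq S : ℝ) : ℂ) = (p : ℂ) := by
      rw [← Complex.mul_conj, ← Complex.star_def, mul_comm]; exact key
    exact_mod_cast h2
  rw [Complex.norm_def, hnorm]

lemma abs_quad_sum_le (hp : 2 < p) (A B : ZMod p) (hB : B ≠ 0) :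
    ‖∑ x : ZMod p, ep p (A * x ^ 2 + B * x)‖ ≤ Real.sqrt p := by
  by_cases hA : A = 0
  · have : ∑ x : ZMod p, ep p (A * x ^ 2 + B * x) = 0 := by
      have h0 := sum_ep_lin (p := p) B
      rw [if_neg hB] at h0
      rw [← h0]
      exact Finset.sum_congr rfl fun x _ => by rw [hA]; ring_nf
    rw [this, norm_zero]
    positivity
  · exact le_of_eq (abs_quad_sum hp A B hA)

lemma Kquad_eq (hp : 2 < p) (x y : ZMod p) (hy : y ≠ 0) :
    Kquad p x y = (p : ℂ)⁻¹ * (ep p (-(x ^ 2) * (4 * y)⁻¹) * ∑ z : ZMod p, ep p (y * z ^ 2)) := by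
  rw [Kquad, if_neg hy]
  congr 1
  have harg : ∀ z : ZMod p,
      x * (z - x * (2 * y)⁻¹) + y * (z - x * (2 * y)⁻¹) ^ 2
        = -(x ^ 2) * (4 * y)⁻¹ + y * z ^ 2 := by
    intro z
    have h2 := twoNZ (p := p) hp
    have h4 := fourNZ (p := p) hp
    field_simp
    ring
  calc ∑ z : ZMod p, ep p (x * z + y * z ^ 2)
      = ∑ z : ZMod p, ep p (x * (z - x * (2 * y)⁻¹) + y * (z - x * (2 * y)⁻¹) ^ 2) := by
        exact (Fintype.sum_equiv (Equiv.subRight (x * (2 * y)⁻¹)) _ _ fun z => rfl).symm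
    _ = ∑ z : ZMod p, (ep p (-(x ^ 2) * (4 * y)⁻¹) * ep p (y * z ^ 2)) := by
        refine Finset.sum_congr rfl fun z _ => ?_
        rw [harg z, ep_add']
    _ = ep p (-(x ^ 2) * (4 * y)⁻¹) * ∑ z : ZMod p, ep p (y * z ^ 2) := by
        rw [Finset.mul_sum]

lemma abs_G (hp : 2 < p) (t : ZMod p) (ht : t ≠ 0) :
    ‖∑ z : ZMod p, ep p (t * z ^ 2)‖ = Real.sqrt p := by
  have := abs_quad_sum hp t 0 ht
  rw [← this]
  congr 1
  exact Finset.sum_congr rfl fun z _ => by ring_nf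

end Aux

/-- Fourth-moment bound for the quadratic Gauss sum kernel: for `h ≠ 0`, `y ≠ y'` with
`y, y', y+h, y'+h` all nonzero,
`|∑ₓ K(x,y) conj(K(x−h,y+h)) conj(K(x,y')) K(x−h,y'+h)| ≤ p^{−3/2}`. -/
theorem quad_fourth_moment (p : ℕ) [Fact p.Prime] (hp : 2 < p) (h : ZMod p) (hh : h ≠ 0)
    (y y' : ZMod p) (hyy' : y ≠ y') (hy : y ≠ 0) (hy' : y' ≠ 0)
    (hyh : y + h ≠ 0) (hy'h : y' + h ≠ 0) :
    ‖∑ x : ZMod p,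
        Kquad p x y * star (Kquad p (x - h) (y + h)) * star (Kquad p x y') *
          Kquad p (x - h) (y' + h)‖
      ≤ (p : ℝ) ^ (-(3/2 : ℝ)) := by
  have h2 := twoNZ (p := p) hp
  have h4 := fourNZ (p := p) hp
  set G : ZMod p → ℂ := fun t => ∑ z : ZMod p, ep p (t * z ^ 2) with hG
  set A : ZMod p := (4 * (y + h))⁻¹ + (4 * y')⁻¹ - (4 * y)⁻¹ - (4 * (y' + h))⁻¹ with hA
  set B : ZMod p := h * (2 * (y' + h))⁻¹ - h * (2 * (y + h))⁻¹ with hB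
  set C : ZMod p := h ^ 2 * (4 * (y + h))⁻¹ - h ^ 2 * (4 * (y' + h))⁻¹ with hC
  set Γ : ℂ := G y * star (G (y + h)) * star (G y') * G (y' + h) with hΓ
  have hstarK : ∀ (x t : ZMod p), t ≠ 0 →
      star (Kquad p x t) = (p : ℂ)⁻¹ * (ep p ((x ^ 2) * (4 * t)⁻¹) * star (G t)) := by
    intro x t ht
    rw [Kquad_eq hp x t ht, star_mul', star_mul', star_ep']
    congr 2
    · simp
    · congr 1; ring
  have hterm : ∀ x : ZMod p,
      Kquad p x y * star (Kquad p (x - h) (y + h)) * star (Kquad p x y') *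
          Kquad p (x - h) (y' + h)
        = ((p : ℂ)⁻¹ ^ 4 * Γ * ep p C) * ep p (A * x ^ 2 + B * x) := by
    intro x
    rw [Kquad_eq hp x y hy, Kquad_eq hp (x - h) (y' + h) hy'h,
      hstarK (x - h) (y + h) hyh, hstarK x y' hy']
    have hcomb : ep p (-(x ^ 2) * (4 * y)⁻¹) * ep p ((x - h) ^ 2 * (4 * (y + h))⁻¹) *
        ep p (x ^ 2 * (4 * y')⁻¹) * ep p (-((x - h) ^ 2) * (4 * (y' + h))⁻¹)
          = ep p C * ep p (A * x ^ 2 + B * x) := by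
      rw [← ep_add', ← ep_add', ← ep_add', ← ep_add']
      congr 1
      rw [hA, hB, hC]
      have h24 : (2 : ZMod p)⁻¹ = 2 * (4 : ZMod p)⁻¹ := by
        rw [show (4 : ZMod p) = 2 * 2 by norm_num, mul_inv, ← mul_assoc,
          mul_inv_cancel₀ h2, one_mul]
      simp only [mul_inv, h24]
      ring
    calc (p : ℂ)⁻¹ * (ep p (-(x ^ 2) * (4 * y)⁻¹) * G y) *
          ((p : ℂ)⁻¹ * (ep p ((x - h) ^ 2 * (4 * (y + h))⁻¹) * star (G (y + h)))) *
          ((p : ℂ)⁻¹ * (ep p (x ^ 2 * (4 * y')⁻¹) * star (G y'))) *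
          ((p : ℂ)⁻¹ * (ep p (-((x - h) ^ 2) * (4 * (y' + h))⁻¹) * G (y' + h)))
        = (p : ℂ)⁻¹ ^ 4 * Γ *
            (ep p (-(x ^ 2) * (4 * y)⁻¹) * ep p ((x - h) ^ 2 * (4 * (y + h))⁻¹) *
              ep p (x ^ 2 * (4 * y')⁻¹) * ep p (-((x - h) ^ 2) * (4 * (y' + h))⁻¹)) := by
          rw [hΓ]; ring
      _ = ((p : ℂ)⁻¹ ^ 4 * Γ * ep p C) * ep p (A * x ^ 2 + B * x) := by
          rw [hcomb]; ring
  rw [Finset.sum_congr rfl fun x _ => hterm x, ← Finset.mul_sum]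
  rw [norm_mul, norm_mul, norm_mul]
  have hBne : B ≠ 0 := by
    have hBval : B * (2 * (y + h) * (y' + h)) = h * (y - y') := by
      rw [hB]
      field_simp
      ring
    intro h0
    apply mul_ne_zero hh (sub_ne_zero.mpr hyy')
    rw [← hBval, h0, zero_mul]
  have hp0 : (0 : ℝ) < p := by positivity
  have habsG : ∀ t : ZMod p, t ≠ 0 → ‖G t‖ = Real.sqrt p := fun t ht =>
    abs_G hp t ht
  have hΓabs : ‖Γ‖ = Real.sqrt p ^ 4 := by
    have habs_star : ∀ z : ℂ, ‖star z‖ = ‖z‖ := fun z =>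
      Complex.norm_conj z
    rw [hΓ, norm_mul, norm_mul, norm_mul, habs_star, habs_star,
      habsG y hy, habsG (y + h) hyh, habsG y' hy', habsG (y' + h) hy'h]
    ring
  have habs1 : ‖(p : ℂ)⁻¹ ^ 4‖ = ((p : ℝ)⁻¹) ^ 4 := by
    rw [norm_pow, norm_inv, Complex.norm_natCast]
  rw [habs1, hΓabs, abs_ep']
  have hsum := abs_quad_sum_le hp A B hBne
  have hsqrt : Real.sqrt p = (p : ℝ) ^ (1 / 2 : ℝ) := Real.sqrt_eq_rpow _
  calc ((p : ℝ)⁻¹) ^ 4 * Real.sqrt p ^ 4 * 1 * ‖∑ x : ZMod p, ep p (A * x ^ 2 + B * x)‖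
      ≤ ((p : ℝ)⁻¹) ^ 4 * Real.sqrt p ^ 4 * 1 * Real.sqrt p := by gcongr
    _ = (p : ℝ) ^ (-(3 / 2 : ℝ)) := by
        rw [mul_one, hsqrt,
          show ((p : ℝ)⁻¹) = (p : ℝ) ^ (-1 : ℝ) from (Real.rpow_neg_one _).symm,
          ← Real.rpow_natCast ((p : ℝ) ^ (-1 : ℝ)) 4,
          ← Real.rpow_natCast ((p : ℝ) ^ (1 / 2 : ℝ)) 4,
          ← Real.rpow_mul hp0.le, ← Real.rpow_mul hp0.le,
          ← Real.rpow_add hp0, ← Real.rpow_add hp0]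
        norm_num
end

section
/- Let p be a prime, d ≥ 2 with p ∤ d, and c₁, c₂, c₃, c₄ ∈ ZMod p coefficients. The homogeneous polynomial F_d(z₁,z₂,z₃) = c₁ z₁^d + c₂ z₂^d + c₃ z₃^d + c₄ (z₂+z₃−z₁)^d over ZMod p has the property: if all cᵢ ≠ 0 and there is no solution in ZMod p to the compatibility equation (arising from setting ∇F_d = 0), then every nonzero point of the affine cone {F_d = 0} has nonvanishing gradient; i.e., the projective hypersurface {F_d = 0} in P² is smooth. -/
open Finset

/-- Smoothness of the projective hypersurface `{F_d = 0}` where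
`F_d(z₁,z₂,z₃) = c₁z₁^d + c₂z₂^d + c₃z₃^d + c₄(z₂+z₃−z₁)^d`: if all `cᵢ ≠ 0` and the
compatibility equation (from `∇F_d = 0`) has no solution, then every nonzero point of the
affine cone `{F_d = 0}` has nonvanishing gradient. -/
theorem Fd_hypersurface_smooth (p : ℕ) [Fact p.Prime] (d : ℕ) (hd : 2 ≤ d) (hpd : ¬ (p ∣ d))
    (c₁ c₂ c₃ c₄ : ZMod p) (h₁ : c₁ ≠ 0) (h₂ : c₂ ≠ 0) (h₃ : c₃ ≠ 0) (h₄ : c₄ ≠ 0)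
    (hns : ¬ ∃ r₁ r₂ r₃ : ZMod p,
      r₁ ^ (d - 1) = c₄ / c₁ ∧ r₂ ^ (d - 1) = -c₄ / c₂ ∧ r₃ ^ (d - 1) = -c₄ / c₃ ∧
      r₂ + r₃ - r₁ = 1) :
    ∀ z₁ z₂ z₃ : ZMod p, ¬ (z₁ = 0 ∧ z₂ = 0 ∧ z₃ = 0) →
      c₁ * z₁ ^ d + c₂ * z₂ ^ d + c₃ * z₃ ^ d + c₄ * (z₂ + z₃ - z₁) ^ d = 0 →
      ¬ ((d : ZMod p) * c₁ * z₁ ^ (d - 1)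
            - (d : ZMod p) * c₄ * (z₂ + z₃ - z₁) ^ (d - 1) = 0 ∧
         (d : ZMod p) * c₂ * z₂ ^ (d - 1)
            + (d : ZMod p) * c₄ * (z₂ + z₃ - z₁) ^ (d - 1) = 0 ∧
         (d : ZMod p) * c₃ * z₃ ^ (d - 1)
            + (d : ZMod p) * c₄ * (z₂ + z₃ - z₁) ^ (d - 1) = 0) := by
  intro z₁ z₂ z₃ hnz _ ⟨g₁, g₂, g₃⟩
  haveI : DecidableEq (ZMod p) := inferInstance
  have hdne : (d : ZMod p) ≠ 0 := by
    simpa [ZMod.natCast_eq_zero_iff] using hpd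
  have hd1 : d - 1 ≠ 0 := by omega
  set w := z₂ + z₃ - z₁ with hw
  -- turn gradient equations into c₁ z₁^{d-1} = c₄ w^{d-1}, etc.
  have e₁ : c₁ * z₁ ^ (d - 1) = c₄ * w ^ (d - 1) := by
    have := mul_left_cancel₀ hdne (a := (d : ZMod p))
      (b := c₁ * z₁ ^ (d - 1)) (c := c₄ * w ^ (d - 1)) (by ring_nf; ring_nf at g₁; linear_combination g₁)
    exact this
  have e₂ : c₂ * z₂ ^ (d - 1) = -(c₄ * w ^ (d - 1)) := by
    apply mul_left_cancel₀ hdne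
    ring_nf; ring_nf at g₂; linear_combination g₂
  have e₃ : c₃ * z₃ ^ (d - 1) = -(c₄ * w ^ (d - 1)) := by
    apply mul_left_cancel₀ hdne
    ring_nf; ring_nf at g₃; linear_combination g₃
  by_cases hwz : w = 0
  · apply hnz
    have hz : ∀ c z : ZMod p, c ≠ 0 → c * z ^ (d - 1) = c₄ * w ^ (d - 1) ∨
        c * z ^ (d - 1) = -(c₄ * w ^ (d - 1)) → z = 0 := by
      intro c z hc h
      have : c * z ^ (d - 1) = 0 := by
        rcases h with h | h <;> simp [h, hwz, zero_pow hd1]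
      have := (mul_eq_zero.mp this).resolve_left hc
      exact pow_eq_zero_iff hd1 |>.mp this
    exact ⟨hz c₁ z₁ h₁ (Or.inl e₁), hz c₂ z₂ h₂ (Or.inr e₂), hz c₃ z₃ h₃ (Or.inr e₃)⟩
  · apply hns
    refine ⟨z₁ / w, z₂ / w, z₃ / w, ?_, ?_, ?_, ?_⟩
    · rw [div_pow, div_eq_div_iff (pow_ne_zero _ hwz) h₁]
      linear_combination e₁
    · rw [div_pow, div_eq_div_iff (pow_ne_zero _ hwz) h₂]
      linear_combination e₂
    · rw [div_pow, div_eq_div_iff (pow_ne_zero _ hwz) h₃]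
      linear_combination e₃
    · field_simp
      exact hw.symm
end
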